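/- arXiv:1007.1957 — 3 statements merged into one kernel-verified Lean document; each statement's English description precedes it below -/
import Mathlib

section
/- Let 1 ≤ q < ∞ and s ∈ ℝ with (s−1)q < −1. Then almost surely Σ_{n∈ℤ∖{0}} ⟨n⟩^{sq} |n|^{−q} |g_n|^q < ∞; that is, the Fourier–Wiener series u belongs almost surely to the Fourier–Lebesgue space 𝓕L^{s,q}(𝕋) (equivalently, to the modulation space M^{p,q}_s(𝕋) for every 1 ≤ p ≤ ∞). -/
open MeasureTheory ProbabilityTheory Filter
open scoped ENNReal NNReal

noncomputable section

/-- The family `(gₙ)_{n ∈ ℤ ∖ {0}}` is a family of independent standard complex-valued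
Gaussian random variables: writing `gₙ = aₙ + i bₙ`, all the real and imaginary parts
`aₙ, bₙ` (for `n ≠ 0`) are mutually independent standard real `N(0,1)` Gaussians. -/
def IsStdComplexGaussianFamily {Ω : Type*} [MeasurableSpace Ω] (P : Measure Ω)
    (g : ℤ → Ω → ℂ) : Prop :=
  iIndepFun (m := fun _ => (inferInstance : MeasurableSpace ℝ))
    (fun i : {n : ℤ // n ≠ 0} × Bool => fun ω =>
      if i.2 then (g (i.1 : ℤ) ω).re else (g (i.1 : ℤ) ω).im) P ∧
  ∀ i : {n : ℤ // n ≠ 0} × Bool,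
    P.map (fun ω => if i.2 then (g (i.1 : ℤ) ω).re else (g (i.1 : ℤ) ω).im)
      = gaussianReal 0 1

lemma integrable_abs_rpow_mul_exp_neg_mul_sq' {b : ℝ} (hb : 0 < b) {s : ℝ} (hs : -1 < s) :
    Integrable fun x : ℝ => |x| ^ s * Real.exp (-b * x ^ 2) := by
  have hI : IntegrableOn (fun x : ℝ => |x| ^ s * Real.exp (-b * x ^ 2)) (Set.Ioi 0) := by
    refine (integrableOn_rpow_mul_exp_neg_mul_sq hb hs).congr_fun (fun x hx => ?_)
      measurableSet_Ioi
    rw [abs_of_pos hx]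
  rw [← integrableOn_univ, ← Set.Iio_union_Ici (a := (0:ℝ)), integrableOn_union,
    integrableOn_Ici_iff_integrableOn_Ioi]
  refine ⟨?_, hI⟩
  rw [← (Measure.measurePreserving_neg (volume : Measure ℝ)).integrableOn_comp_preimage
      (Homeomorph.neg ℝ).measurableEmbedding]
  simpa [Function.comp_def, abs_neg] using hI

lemma gaussian_moment_lt_top' {q : ℝ} (hq : 0 ≤ q) :
    ∫⁻ x, ENNReal.ofReal (|x| ^ q) ∂(gaussianReal 0 1) < ⊤ := by
  rw [gaussianReal_of_var_ne_zero 0 one_ne_zero,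
    lintegral_withDensity_eq_lintegral_mul _ (measurable_gaussianPDF 0 1)
      ((measurable_abs.pow measurable_const).ennreal_ofReal)]
  have hint : Integrable (fun x : ℝ => gaussianPDFReal 0 1 x * |x| ^ q) := by
    have : (fun x : ℝ => gaussianPDFReal 0 1 x * |x| ^ q)
        = fun x => (Real.sqrt (2 * Real.pi))⁻¹ * (|x| ^ q * Real.exp (-(2⁻¹ : ℝ) * x ^ 2)) := by
      ext x
      simp only [gaussianPDFReal, NNReal.coe_one, mul_one, sub_zero]
      rw [show -x^2/(2:ℝ) = -2⁻¹ * x^2 by ring]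
      ring
    rw [this]
    exact (integrable_abs_rpow_mul_exp_neg_mul_sq' (by norm_num) (by linarith)).const_mul _
  calc ∫⁻ x, (gaussianPDF 0 1 * fun x => ENNReal.ofReal (|x| ^ q)) x
      = ∫⁻ x, ENNReal.ofReal (gaussianPDFReal 0 1 x * |x| ^ q) := by
        refine lintegral_congr fun x => ?_
        simp only [Pi.mul_apply, gaussianPDF]
        rw [ENNReal.ofReal_mul (gaussianPDFReal_nonneg _ _ _)]
    _ < ⊤ := hint.lintegral_lt_top

lemma summable_coef' {q s : ℝ} (_hq : 1 ≤ q) (hsq : (s - 1) * q < -1) :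
    Summable (fun n : {n : ℤ // n ≠ 0} =>
      (1 + ((n : ℤ) : ℝ) ^ 2) ^ (s * q / 2) * |((n : ℤ) : ℝ)| ^ (-q)) := by
  set K : ℝ := max ((2:ℝ) ^ (s * q / 2)) 1 with hKdef
  have hK1 : (1:ℝ) ≤ K := le_max_right _ _
  have hK2 : (2:ℝ) ^ (s * q / 2) ≤ K := le_max_left _ _
  have hb : (1:ℝ) < -((s - 1) * q) := by linarith
  have hsum : Summable (fun n : ℤ => K * |(n : ℝ)| ^ ((s - 1) * q)) := by
    have h := Real.summable_abs_int_rpow hb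
    simpa [neg_neg] using h.mul_left K
  refine Summable.of_nonneg_of_le (fun n => by positivity) (fun n => ?_)
    (hsum.comp_injective Subtype.val_injective)
  obtain ⟨m, hm⟩ := n
  simp only [Function.comp_apply]
  set x : ℝ := |(m : ℝ)| with hxdef
  have hx1 : (1:ℝ) ≤ x := by
    rw [hxdef, ← Int.cast_abs]
    exact_mod_cast Int.one_le_abs hm
  have hx0 : (0:ℝ) < x := lt_of_lt_of_le one_pos hx1
  have hm2 : ((m : ℝ)) ^ 2 = x ^ 2 := (sq_abs _).symm
  have hxq : x ^ (2 * (s * q / 2)) = x ^ (s * q) := by ring_nf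
  have hpow : (x ^ 2 : ℝ) ^ (s * q / 2) = x ^ (s * q) := by
    rw [← Real.rpow_natCast x 2, ← Real.rpow_mul hx0.le]
    push_cast
    rw [hxq]
  have hbase : (1 + ((m : ℝ)) ^ 2) ^ (s * q / 2) ≤ K * x ^ (s * q) := by
    rcases le_or_gt 0 (s * q / 2) with he | he
    · have h1 : (1 : ℝ) + (m:ℝ) ^ 2 ≤ 2 * x ^ 2 := by
        rw [hm2]; nlinarith
      calc (1 + ((m : ℝ)) ^ 2) ^ (s * q / 2) ≤ (2 * x ^ 2) ^ (s * q / 2) :=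
            Real.rpow_le_rpow (by positivity) h1 he
        _ = 2 ^ (s * q / 2) * (x ^ 2) ^ (s * q / 2) :=
            Real.mul_rpow (by norm_num) (by positivity)
        _ ≤ K * x ^ (s * q) := by rw [hpow]; exact mul_le_mul_of_nonneg_right hK2 (by positivity)
    · have h1 : x ^ 2 ≤ 1 + (m:ℝ) ^ 2 := by rw [hm2]; nlinarith
      calc (1 + ((m : ℝ)) ^ 2) ^ (s * q / 2) ≤ (x ^ 2) ^ (s * q / 2) :=
            Real.rpow_le_rpow_of_nonpos (by positivity) h1 he.le
        _ = x ^ (s * q) := hpow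
        _ ≤ K * x ^ (s * q) := le_mul_of_one_le_left (by positivity) hK1
  calc (1 + ((m : ℝ)) ^ 2) ^ (s * q / 2) * x ^ (-q)
      ≤ (K * x ^ (s * q)) * x ^ (-q) := mul_le_mul_of_nonneg_right hbase (by positivity)
    _ = K * x ^ ((s - 1) * q) := by
        rw [mul_assoc, ← Real.rpow_add hx0]
        ring_nf
  -- done

lemma ae_tsum_lt_top_of_bounded {Ω : Type*} [MeasurableSpace Ω] (P : Measure Ω)
    [IsProbabilityMeasure P] {ι : Type*} [Countable ι] (c : ι → ℝ) (hc : ∀ i, 0 ≤ c i)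
    (hcs : Summable c) (X : ι → Ω → ℝ≥0∞) (hX : ∀ i, AEMeasurable (X i) P)
    (M : ℝ≥0∞) (hM : M < ⊤) (hXb : ∀ i, ∫⁻ ω, X i ω ∂P ≤ M) :
    ∀ᵐ ω ∂P, ∑' i, ENNReal.ofReal (c i) * X i ω < ⊤ := by
  have hmeas : ∀ i, AEMeasurable (fun ω => ENNReal.ofReal (c i) * X i ω) P := fun i =>
    (hX i).const_mul _
  refine ae_lt_top' (AEMeasurable.ennreal_tsum hmeas) (ne_of_lt ?_)
  rw [lintegral_tsum hmeas]
  have hle : ∀ i, ∫⁻ ω, ENNReal.ofReal (c i) * X i ω ∂P ≤ ENNReal.ofReal (c i) * M := by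
    intro i
    rw [lintegral_const_mul' _ _ ENNReal.ofReal_ne_top]
    exact mul_le_mul_right (hXb i) _
  calc ∑' i, ∫⁻ ω, ENNReal.ofReal (c i) * X i ω ∂P
      ≤ ∑' i, ENNReal.ofReal (c i) * M := ENNReal.tsum_le_tsum hle
    _ = (∑' i, ENNReal.ofReal (c i)) * M := ENNReal.tsum_mul_right
    _ < ⊤ := by
        refine ENNReal.mul_lt_top ?_ hM
        rw [← ENNReal.ofReal_tsum_of_nonneg hc hcs]
        exact ENNReal.ofReal_lt_top

/-- If `1 ≤ q < ∞` and `(s-1)q < -1`, then almost surely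
`Σ_{n ≠ 0} ⟨n⟩^{sq} |n|^{-q} |gₙ|^q < ∞`, i.e. the Fourier–Wiener series belongs a.s.
to `𝓕L^{s,q}(𝕋) = M^{p,q}_s(𝕋)`. -/
theorem brownian_in_FourierLebesgue
    {Ω : Type*} [MeasurableSpace Ω] (P : Measure Ω) [IsProbabilityMeasure P]
    (g : ℤ → Ω → ℂ) (hg : IsStdComplexGaussianFamily P g)
    (q s : ℝ) (hq : 1 ≤ q) (hsq : (s - 1) * q < -1) :
    ∀ᵐ ω ∂P,
      (∑' n : {n : ℤ // n ≠ 0},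
        ENNReal.ofReal
          ((1 + ((n : ℤ) : ℝ) ^ 2) ^ (s * q / 2) * |((n : ℤ) : ℝ)| ^ (-q)
            * ‖g (n : ℤ) ω‖ ^ q)) < ⊤ := by
  obtain ⟨-, hmap⟩ := hg
  have hq0 : (0:ℝ) ≤ q := by linarith
  have c : {n : ℤ // n ≠ 0} → ℝ := fun n =>
    (1 + ((n : ℤ) : ℝ) ^ 2) ^ (s * q / 2) * |((n : ℤ) : ℝ)| ^ (-q)
  have hc0 : ∀ n : {n : ℤ // n ≠ 0},
      (0:ℝ) ≤ (1 + ((n : ℤ) : ℝ) ^ 2) ^ (s * q / 2) * |((n : ℤ) : ℝ)| ^ (-q) :=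
    fun n => by positivity
  -- a.e. measurability of the coordinates
  have hAE : ∀ (i : {n : ℤ // n ≠ 0} × Bool),
      AEMeasurable (fun ω => if i.2 then (g (i.1 : ℤ) ω).re else (g (i.1 : ℤ) ω).im) P := by
    intro i
    by_contra h
    have h2 := hmap i
    rw [Measure.map_of_not_aemeasurable h] at h2
    exact (IsProbabilityMeasure.ne_zero (gaussianReal 0 1)) h2.symm
  have hre : ∀ n : {n : ℤ // n ≠ 0}, AEMeasurable (fun ω => (g (n : ℤ) ω).re) P := fun n => by
    simpa using hAE (n, true)
  have him : ∀ n : {n : ℤ // n ≠ 0}, AEMeasurable (fun ω => (g (n : ℤ) ω).im) P := fun n => by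
    simpa using hAE (n, false)
  have habs : ∀ n : {n : ℤ // n ≠ 0},
      AEMeasurable (fun ω => ‖g (n : ℤ) ω‖) P := by
    intro n
    have heq : (fun ω => ‖g (n : ℤ) ω‖)
        = fun ω => Real.sqrt ((g (n:ℤ) ω).re ^ 2 + (g (n:ℤ) ω).im ^ 2) := by
      ext ω
      rw [Complex.norm_def, Complex.normSq_apply]
      ring_nf
    rw [heq]
    exact Real.continuous_sqrt.measurable.comp_aemeasurable
      (((hre n).pow aemeasurable_const).add ((him n).pow aemeasurable_const))
  -- the random variables
  have hX : ∀ n : {n : ℤ // n ≠ 0},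
      AEMeasurable (fun ω => ENNReal.ofReal (‖g (n : ℤ) ω‖ ^ q)) P := fun n =>
    ENNReal.measurable_ofReal.comp_aemeasurable ((habs n).pow aemeasurable_const)
  -- uniform moment bound
  have hMq := gaussian_moment_lt_top' hq0
  set Mq : ℝ≥0∞ := ∫⁻ x, ENNReal.ofReal (|x| ^ q) ∂(gaussianReal 0 1) with hMqdef
  have hkey : ∀ (n : {n : ℤ // n ≠ 0}) (b : Bool),
      ∫⁻ ω, ENNReal.ofReal (|if b then (g (n:ℤ) ω).re else (g (n:ℤ) ω).im| ^ q) ∂P = Mq := by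
    intro n b
    have hf : AEMeasurable (fun x : ℝ => ENNReal.ofReal (|x| ^ q))
        (P.map (fun ω => if b then (g (n:ℤ) ω).re else (g (n:ℤ) ω).im)) :=
      ((measurable_abs.pow measurable_const).ennreal_ofReal).aemeasurable
    have h := lintegral_map' hf (hAE (n, b))
    rw [← h, hmap (n, b)]
  have hbound : ∀ n : {n : ℤ // n ≠ 0},
      ∫⁻ ω, ENNReal.ofReal (‖g (n:ℤ) ω‖ ^ q) ∂P
        ≤ ENNReal.ofReal (2 ^ q) * (Mq + Mq) := by
    intro n
    have hpt : ∀ ω, ENNReal.ofReal (‖g (n:ℤ) ω‖ ^ q)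
        ≤ ENNReal.ofReal (2 ^ q) *
          (ENNReal.ofReal (|(g (n:ℤ) ω).re| ^ q) + ENNReal.ofReal (|(g (n:ℤ) ω).im| ^ q)) := by
      intro ω
      set a := |(g (n:ℤ) ω).re| with hadef
      set b := |(g (n:ℤ) ω).im| with hbdef
      have ha : 0 ≤ a := abs_nonneg _
      have hb : 0 ≤ b := abs_nonneg _
      have h1 : ‖g (n:ℤ) ω‖ ^ q ≤ (a + b) ^ q :=
        Real.rpow_le_rpow (norm_nonneg _) (Complex.norm_le_abs_re_add_abs_im _) hq0
      have hmaxq : (max a b) ^ q ≤ a ^ q + b ^ q := by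
        rcases le_total a b with h | h
        · rw [max_eq_right h]
          exact le_add_of_nonneg_left (Real.rpow_nonneg ha q)
        · rw [max_eq_left h]
          exact le_add_of_nonneg_right (Real.rpow_nonneg hb q)
      have h2 : (a + b) ^ q ≤ 2 ^ q * (a ^ q + b ^ q) := by
        have hmax : a + b ≤ 2 * max a b := by
          rcases le_total a b with h | h
          · rw [max_eq_right h]; linarith
          · rw [max_eq_left h]; linarith
        calc (a + b) ^ q ≤ (2 * max a b) ^ q :=
              Real.rpow_le_rpow (by positivity) hmax hq0
          _ = 2 ^ q * (max a b) ^ q :=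
              Real.mul_rpow (by norm_num) (le_trans ha (le_max_left a b))
          _ ≤ 2 ^ q * (a ^ q + b ^ q) :=
              mul_le_mul_of_nonneg_left hmaxq (Real.rpow_nonneg (by norm_num) q)
      calc ENNReal.ofReal (‖g (n:ℤ) ω‖ ^ q)
          ≤ ENNReal.ofReal (2 ^ q * (a ^ q + b ^ q)) :=
            ENNReal.ofReal_le_ofReal (h1.trans h2)
        _ = ENNReal.ofReal (2 ^ q) * (ENNReal.ofReal (a ^ q) + ENNReal.ofReal (b ^ q)) := by
            rw [ENNReal.ofReal_mul (Real.rpow_nonneg (by norm_num) q),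
              ENNReal.ofReal_add (Real.rpow_nonneg ha q) (Real.rpow_nonneg hb q)]
    calc ∫⁻ ω, ENNReal.ofReal (‖g (n:ℤ) ω‖ ^ q) ∂P
        ≤ ∫⁻ ω, ENNReal.ofReal (2 ^ q) *
            (ENNReal.ofReal (|(g (n:ℤ) ω).re| ^ q) + ENNReal.ofReal (|(g (n:ℤ) ω).im| ^ q)) ∂P :=
          lintegral_mono hpt
      _ = ENNReal.ofReal (2 ^ q) *
          (∫⁻ ω, ENNReal.ofReal (|(g (n:ℤ) ω).re| ^ q)
              + ENNReal.ofReal (|(g (n:ℤ) ω).im| ^ q) ∂P) :=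
          lintegral_const_mul' _ _ ENNReal.ofReal_ne_top
      _ = ENNReal.ofReal (2 ^ q) *
          ((∫⁻ ω, ENNReal.ofReal (|(g (n:ℤ) ω).re| ^ q) ∂P)
              + ∫⁻ ω, ENNReal.ofReal (|(g (n:ℤ) ω).im| ^ q) ∂P) := by
          congr 1
          exact lintegral_add_left'
            ((ENNReal.measurable_ofReal.comp_aemeasurable
                ((measurable_abs.comp_aemeasurable (hre n)).pow aemeasurable_const)) :
              AEMeasurable (fun ω => ENNReal.ofReal (|(g (n:ℤ) ω).re| ^ q)) P) _
      _ = ENNReal.ofReal (2 ^ q) * (Mq + Mq) := by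
          have h1 := hkey n true
          have h2 := hkey n false
          simp only [if_true, Bool.false_eq_true, if_false] at h1 h2
          rw [h1, h2]
  -- conclude
  have main := ae_tsum_lt_top_of_bounded P
    (fun n : {n : ℤ // n ≠ 0} =>
      (1 + ((n : ℤ) : ℝ) ^ 2) ^ (s * q / 2) * |((n : ℤ) : ℝ)| ^ (-q))
    hc0 (summable_coef' hq hsq)
    (fun n ω => ENNReal.ofReal (‖g (n : ℤ) ω‖ ^ q)) hX
    (ENNReal.ofReal (2 ^ q) * (Mq + Mq))
    (ENNReal.mul_lt_top ENNReal.ofReal_lt_top (ENNReal.add_lt_top.mpr ⟨hMq, hMq⟩))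
    hbound
  filter_upwards [main] with ω hω
  have heq : (∑' n : {n : ℤ // n ≠ 0},
      ENNReal.ofReal
        ((1 + ((n : ℤ) : ℝ) ^ 2) ^ (s * q / 2) * |((n : ℤ) : ℝ)| ^ (-q)
          * ‖g (n : ℤ) ω‖ ^ q))
      = ∑' n : {n : ℤ // n ≠ 0},
        ENNReal.ofReal ((1 + ((n : ℤ) : ℝ) ^ 2) ^ (s * q / 2) * |((n : ℤ) : ℝ)| ^ (-q))
          * ENNReal.ofReal (‖g (n : ℤ) ω‖ ^ q) :=
    tsum_congr fun n => ENNReal.ofReal_mul (hc0 n)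
  rw [heq]
  exact hω
end
end

section
/- Let 1 ≤ q < ∞ and s ∈ ℝ with (s−1)q ≥ −1. Then almost surely Σ_{n∈ℤ∖{0}} ⟨n⟩^{sq} |n|^{−q} |g_n|^q = ∞; that is, the Fourier–Wiener series u almost surely does not belong to the Fourier–Lebesgue space 𝓕L^{s,q}(𝕋) (equivalently, to M^{p,q}_s(𝕋) for any 1 ≤ p ≤ ∞). -/
open MeasureTheory ProbabilityTheory Filter

noncomputable section

lemma exp_neg_le_one_sub_half {x : ℝ} (h0 : 0 ≤ x) (h1 : x ≤ 1) :
    Real.exp (-x) ≤ 1 - x / 2 := by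
  have h := Real.add_one_le_exp x
  have hp := Real.exp_pos x
  have hnp := Real.exp_pos (-x)
  have hmul : Real.exp (-x) * Real.exp x = 1 := by
    rw [← Real.exp_add]; simp
  nlinarith [mul_le_mul_of_nonneg_left h hnp.le]


lemma iIndepFun_reindex_ae {Ω I : Type*} [MeasurableSpace Ω] {P : Measure Ω}
    {F : I → Ω → ℝ} (hF : iIndepFun (m := fun _ => (inferInstance : MeasurableSpace ℝ)) F P)
    (idx : ℕ → I) (hidx : Function.Injective idx)
    {B : ℕ → Ω → ℝ} (hB : ∀ k, B k =ᵐ[P] F (idx k)) :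
    iIndepFun (m := fun _ => (inferInstance : MeasurableSpace ℝ)) B P := by
  classical
  rw [iIndepFun_iff_measure_inter_preimage_eq_mul] at hF ⊢
  intro S sets hsets
  set sets' : I → Set ℝ := fun i => sets (Function.invFun idx i) with hsets'def
  have hinv : ∀ k, Function.invFun idx (idx k) = k := fun k =>
    Function.leftInverse_invFun hidx k
  have hmeas : ∀ i ∈ S.image idx, MeasurableSet (sets' i) := by
    intro i hi
    obtain ⟨k, hk, rfl⟩ := Finset.mem_image.mp hi
    simpa only [hsets'def, hinv] using hsets k hk
  have h1 := hF (S.image idx) hmeas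
  have hInter : (⋂ i ∈ S.image idx, F i ⁻¹' sets' i) = ⋂ k ∈ S, F (idx k) ⁻¹' sets k := by
    ext ω
    simp only [Set.mem_iInter, Finset.mem_image, Set.mem_preimage]
    constructor
    · intro h k hk
      have := h (idx k) ⟨k, hk, rfl⟩
      simpa only [hsets'def, hinv] using this
    · rintro h i ⟨k, hk, rfl⟩
      simpa only [hsets'def, hinv] using h k hk
  have hprod : ∏ i ∈ S.image idx, P (F i ⁻¹' sets' i)
      = ∏ k ∈ S, P (F (idx k) ⁻¹' sets k) := by
    rw [Finset.prod_image (fun a _ b _ h => hidx h)]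
    exact Finset.prod_congr rfl fun k _ => by simp only [hsets'def, hinv]
  have haeS : ∀ᵐ ω ∂P, ∀ k ∈ S, B k ω = F (idx k) ω :=
    (Finset.eventually_all S).mpr fun k _ => hB k
  have hmain : P (⋂ k ∈ S, B k ⁻¹' sets k) = P (⋂ k ∈ S, F (idx k) ⁻¹' sets k) := by
    apply measure_congr
    rw [eventuallyEq_set]
    filter_upwards [haeS] with ω hω
    simp only [Set.mem_iInter, Set.mem_preimage]
    exact ⟨fun h k hk => by rw [← hω k hk]; exact h k hk,
           fun h k hk => by rw [hω k hk]; exact h k hk⟩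
  have hfac : ∀ k ∈ S, P (B k ⁻¹' sets k) = P (F (idx k) ⁻¹' sets k) := by
    intro k _
    apply measure_congr
    rw [eventuallyEq_set]
    filter_upwards [hB k] with ω hω
    simp [Set.mem_preimage, hω]
  rw [hmain, ← hInter, h1, hprod]
  exact (Finset.prod_congr rfl hfac).symm

lemma gauss_min_facts (q : ℝ) :
    0 < ∫ x, min (|x| ^ q) 1 ∂(gaussianReal 0 1) ∧
      ∫ x, min (|x| ^ q) 1 ∂(gaussianReal 0 1) ≤ 1 := by
  set γ := gaussianReal 0 1
  have hmeas : Measurable (fun t : ℝ => min (|t| ^ q) 1) := by fun_prop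
  have hnonneg : ∀ x : ℝ, 0 ≤ min (|x| ^ q) 1 :=
    fun x => le_min (Real.rpow_nonneg (abs_nonneg x) q) zero_le_one
  have hle : ∀ x : ℝ, min (|x| ^ q) 1 ≤ 1 := fun x => min_le_right _ _
  have hint : Integrable (fun x : ℝ => min (|x| ^ q) 1) γ := by
    refine (integrable_const (1:ℝ)).mono' hmeas.aestronglyMeasurable ?_
    filter_upwards with x
    rw [Real.norm_eq_abs, abs_of_nonneg (hnonneg x)]
    exact hle x
  constructor
  · rw [integral_pos_iff_support_of_nonneg hnonneg hint]
    have hsub : ({0}ᶜ : Set ℝ) ⊆ Function.support (fun x : ℝ => min (|x| ^ q) 1) := by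
      intro x hx
      have hx0 : x ≠ 0 := hx
      have : 0 < min (|x| ^ q) 1 :=
        lt_min (Real.rpow_pos_of_pos (abs_pos.mpr hx0) q) one_pos
      exact this.ne'
    have h0 : γ ({0} : Set ℝ) = 0 :=
      gaussianReal_absolutelyContinuous 0 one_ne_zero (measure_singleton 0)
    have hc : γ ({0}ᶜ : Set ℝ) = 1 := by
      rw [measure_compl (measurableSet_singleton 0) (measure_ne_top _ _), h0]
      simp
    calc (0:ENNReal) < 1 := by norm_num
      _ = γ ({0}ᶜ : Set ℝ) := hc.symm
      _ ≤ γ (Function.support (fun x : ℝ => min (|x| ^ q) 1)) := measure_mono hsub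
  · calc ∫ x, min (|x| ^ q) 1 ∂γ ≤ ∫ _, (1:ℝ) ∂γ :=
        integral_mono hint (integrable_const 1) hle
    _ = 1 := by simp


lemma coeff_key {q s : ℝ} (hq : 1 ≤ q) (hsq : -1 ≤ (s - 1) * q) (k : ℕ) (z : ℂ) :
    min 1 ((2:ℝ) ^ (s * q / 2)) / ((k : ℝ) + 1) * min (|z.re| ^ q) 1
      ≤ (1 + ((k : ℝ) + 1) ^ 2) ^ (s * q / 2) * |(k : ℝ) + 1| ^ (-q)
        * ‖z‖ ^ q := by
  set κ := min 1 ((2:ℝ) ^ (s * q / 2)) with hκdef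
  set r := (k : ℝ) + 1 with hrdef
  have hr0 : (0:ℝ) < r := by positivity
  have hr1 : (1:ℝ) ≤ r := by simp [hrdef]
  have hκ0 : 0 < κ := lt_min one_pos (Real.rpow_pos_of_pos two_pos _)
  have hκ1 : κ ≤ 1 := min_le_left _ _
  have hrabs : |r| = r := abs_of_pos hr0
  have h1 : min (|z.re| ^ q) 1 ≤ ‖z‖ ^ q :=
    (min_le_left _ _).trans
      (Real.rpow_le_rpow (abs_nonneg _) (Complex.abs_re_le_norm z) (by linarith))
  have hrs : r ^ (s * q) = ((r ^ 2 : ℝ)) ^ (s * q / 2) := by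
    rw [← Real.rpow_natCast r 2, ← Real.rpow_mul hr0.le]
    congr 1
    ring
  have hbase : κ * r ^ (s * q) ≤ (1 + r ^ 2) ^ (s * q / 2) := by
    rcases le_or_gt 0 (s * q) with h | h
    · have h2 : ((r ^ 2 : ℝ)) ^ (s * q / 2) ≤ (1 + r ^ 2) ^ (s * q / 2) :=
        Real.rpow_le_rpow (by positivity) (by linarith) (by linarith)
      calc κ * r ^ (s * q) ≤ 1 * r ^ (s * q) :=
            mul_le_mul_of_nonneg_right hκ1 (Real.rpow_nonneg hr0.le _)
        _ = ((r ^ 2 : ℝ)) ^ (s * q / 2) := by rw [one_mul, hrs]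
        _ ≤ _ := h2
    · have h2r : (1 + r ^ 2 : ℝ) ≤ 2 * r ^ 2 := by nlinarith
      have h2 : ((2 * r ^ 2 : ℝ)) ^ (s * q / 2) ≤ (1 + r ^ 2) ^ (s * q / 2) :=
        Real.rpow_le_rpow_of_nonpos (by positivity) h2r (by linarith)
      have hmul : ((2 * r ^ 2 : ℝ)) ^ (s * q / 2)
          = (2:ℝ) ^ (s * q / 2) * ((r ^ 2 : ℝ)) ^ (s * q / 2) :=
        Real.mul_rpow (by norm_num) (by positivity)
      calc κ * r ^ (s * q) ≤ (2:ℝ) ^ (s * q / 2) * r ^ (s * q) :=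
            mul_le_mul_of_nonneg_right (min_le_right _ _) (Real.rpow_nonneg hr0.le _)
        _ = ((2 * r ^ 2 : ℝ)) ^ (s * q / 2) := by rw [hrs, hmul]
        _ ≤ _ := h2
  have h2 : κ / r ≤ (1 + r ^ 2) ^ (s * q / 2) * r ^ (-q) := by
    have hexp : r ^ ((-1:ℝ)) ≤ r ^ (s * q - q) :=
      Real.rpow_le_rpow_of_exponent_le hr1 (by nlinarith)
    have hsplit : r ^ (s * q - q) = r ^ (s * q) * r ^ (-q) := by
      rw [← Real.rpow_add hr0]; ring_nf
    calc κ / r = κ * r ^ ((-1:ℝ)) := by rw [Real.rpow_neg_one]; ring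
      _ ≤ κ * r ^ (s * q - q) := mul_le_mul_of_nonneg_left hexp hκ0.le
      _ = (κ * r ^ (s * q)) * r ^ (-q) := by rw [hsplit]; ring
      _ ≤ (1 + r ^ 2) ^ (s * q / 2) * r ^ (-q) :=
            mul_le_mul_of_nonneg_right hbase (Real.rpow_nonneg hr0.le _)
  calc κ / r * min (|z.re| ^ q) 1
      ≤ ((1 + r ^ 2) ^ (s * q / 2) * r ^ (-q)) * (‖z‖ ^ q) := by
        apply mul_le_mul h2 h1 (le_min (Real.rpow_nonneg (abs_nonneg _) _) zero_le_one)
        positivity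
    _ = (1 + r ^ 2) ^ (s * q / 2) * |r| ^ (-q) * ‖z‖ ^ q := by rw [hrabs]

/-- If `1 ≤ q < ∞` and `(s-1)q ≥ -1`, then almost surely
`Σ_{n ≠ 0} ⟨n⟩^{sq} |n|^{-q} |gₙ|^q = ∞`, i.e. the Fourier–Wiener series a.s. does not
belong to `𝓕L^{s,q}(𝕋) = M^{p,q}_s(𝕋)`. -/
theorem brownian_not_in_FourierLebesgue
    {Ω : Type*} [MeasurableSpace Ω] (P : Measure Ω) [IsProbabilityMeasure P]
    (g : ℤ → Ω → ℂ) (hg : IsStdComplexGaussianFamily P g)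
    (q s : ℝ) (hq : 1 ≤ q) (hsq : -1 ≤ (s - 1) * q) :
    ∀ᵐ ω ∂P,
      (∑' n : {n : ℤ // n ≠ 0},
        ENNReal.ofReal
          ((1 + ((n : ℤ) : ℝ) ^ 2) ^ (s * q / 2) * |((n : ℤ) : ℝ)| ^ (-q)
            * ‖g (n : ℤ) ω‖ ^ q)) = ⊤ := by
  classical
  set γ := gaussianReal 0 1 with hγdef
  -- the index embedding
  have hne : ∀ k : ℕ, ((k : ℤ) + 1) ≠ 0 := by
    intro k
    have : (0:ℤ) < (k:ℤ) + 1 := by positivity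
    exact this.ne'
  set idx : ℕ → {n : ℤ // n ≠ 0} × Bool :=
    fun k => (⟨(k : ℤ) + 1, hne k⟩, true) with hidxdef
  have hidx : Function.Injective idx := by
    intro a b h
    have h2 : ((a : ℤ)) + 1 = (b : ℤ) + 1 := by
      have := congrArg (fun p => (p.1 : ℤ)) h
      simpa [hidxdef] using this
    have : (a : ℤ) = b := by omega
    exact_mod_cast this
  -- the real parts
  set a : ℕ → Ω → ℝ := fun k ω => (g ((k : ℤ) + 1) ω).re with hadef
  have hmap : ∀ k, P.map (a k) = γ := by
    intro k
    simpa [hidxdef, hadef] using hg.2 (idx k)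
  have hgmeas : ∀ k, AEMeasurable (a k) P := by
    intro k
    exact aemeasurable_of_map_neZero (by rw [hmap k]; infer_instance)
  set a' : ℕ → Ω → ℝ := fun k => (hgmeas k).mk with ha'def
  have ha'meas : ∀ k, Measurable (a' k) := fun k => (hgmeas k).measurable_mk
  have ha'ae : ∀ k, a k =ᵐ[P] a' k := fun k => (hgmeas k).ae_eq_mk
  -- independence of the modified real parts
  have hBF : ∀ k, a' k =ᵐ[P]
      (fun i : {n : ℤ // n ≠ 0} × Bool => fun ω =>
        if i.2 then (g (i.1 : ℤ) ω).re else (g (i.1 : ℤ) ω).im) (idx k) := by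
    intro k
    have he : (fun i : {n : ℤ // n ≠ 0} × Bool => fun ω =>
        if i.2 then (g (i.1 : ℤ) ω).re else (g (i.1 : ℤ) ω).im) (idx k) = a k := by
      funext ω
      simp [hidxdef, hadef]
    rw [he]
    exact (ha'ae k).symm
  have hindep_a' : iIndepFun (m := fun _ => (inferInstance : MeasurableSpace ℝ)) a' P :=
    iIndepFun_reindex_ae hg.1 idx hidx hBF
  -- constants
  set κ : ℝ := min 1 ((2:ℝ) ^ (s * q / 2)) with hκdef
  have hκ0 : 0 < κ := lt_min one_pos (Real.rpow_pos_of_pos two_pos _)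
  have hκ1 : κ ≤ 1 := min_le_left _ _
  set d : ℕ → ℝ := fun k => κ / ((k : ℝ) + 1) with hddef
  have hd0 : ∀ k, 0 < d k := fun k => div_pos hκ0 (by positivity)
  have hd1 : ∀ k, d k ≤ 1 := by
    intro k
    rw [hddef, div_le_one (by positivity : (0:ℝ) < (k:ℝ) + 1)]
    have : (1:ℝ) ≤ (k:ℝ) + 1 := by simp
    linarith
  -- the variables X
  set φ : ℕ → ℝ → ℝ := fun k t => d k * min (|t| ^ q) 1 with hφdef
  have hφmeas : ∀ k, Measurable (φ k) := by
    intro k; fun_prop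
  set X : ℕ → Ω → ℝ := fun k => φ k ∘ a' k with hXdef
  have hXindep : iIndepFun (m := fun _ => (inferInstance : MeasurableSpace ℝ)) X P :=
    hindep_a'.comp φ hφmeas
  have hXmeas : ∀ k, Measurable (X k) := fun k => (hφmeas k).comp (ha'meas k)
  have hmin01 : ∀ t : ℝ, 0 ≤ min (|t| ^ q) 1 ∧ min (|t| ^ q) 1 ≤ 1 :=
    fun t => ⟨le_min (Real.rpow_nonneg (abs_nonneg t) q) zero_le_one, min_le_right _ _⟩
  have hX0 : ∀ k ω, 0 ≤ X k ω := by
    intro k ω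
    exact mul_nonneg (hd0 k).le (hmin01 _).1
  have hX1 : ∀ k ω, X k ω ≤ 1 := by
    intro k ω
    calc X k ω ≤ d k * 1 := mul_le_mul_of_nonneg_left (hmin01 _).2 (hd0 k).le
      _ ≤ 1 := by rw [mul_one]; exact hd1 k
  -- the mean
  set μ0 : ℝ := ∫ x, min (|x| ^ q) 1 ∂γ with hμ0def
  obtain ⟨hμ0pos, hμ0le⟩ := gauss_min_facts q
  rw [← hγdef, ← hμ0def] at hμ0pos hμ0le
  have hminmeas : Measurable (fun t : ℝ => min (|t| ^ q) 1) := by fun_prop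
  -- expectation of X k
  have hXint : ∀ k, Integrable (X k) P := by
    intro k
    refine (integrable_const (1:ℝ)).mono' (hXmeas k).aestronglyMeasurable ?_
    filter_upwards with ω
    rw [Real.norm_eq_abs, abs_of_nonneg (hX0 k ω)]
    exact hX1 k ω
  have hEX : ∀ k, ∫ ω, X k ω ∂P = d k * μ0 := by
    intro k
    have h1 : ∫ ω, X k ω ∂P = d k * ∫ ω, min (|a' k ω| ^ q) 1 ∂P := by
      rw [← integral_const_mul]
      rfl
    have h2 : ∫ ω, min (|a' k ω| ^ q) 1 ∂P = ∫ ω, min (|a k ω| ^ q) 1 ∂P := by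
      apply integral_congr_ae
      filter_upwards [ha'ae k] with ω hω
      rw [hω]
    have h3 : ∫ ω, min (|a k ω| ^ q) 1 ∂P = ∫ x, min (|x| ^ q) 1 ∂γ := by
      rw [← hmap k, integral_map (hgmeas k) hminmeas.aestronglyMeasurable]
    rw [h1, h2, h3, hμ0def]
  -- mgf bound
  have hdμ01 : ∀ k, d k * μ0 ≤ 1 := by
    intro k
    calc d k * μ0 ≤ 1 * 1 :=
      mul_le_mul (hd1 k) hμ0le (le_of_lt hμ0pos) zero_le_one
    _ = 1 := one_mul 1
  have hexpint : ∀ k, Integrable (fun ω => Real.exp ((-1) * X k ω)) P := by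
    intro k
    refine (integrable_const (1:ℝ)).mono'
      (((hXmeas k).const_mul (-1)).exp.aestronglyMeasurable) ?_
    filter_upwards with ω
    rw [Real.norm_eq_abs, abs_of_pos (Real.exp_pos _)]
    rw [Real.exp_le_one_iff]
    nlinarith [hX0 k ω]
  have hmgf : ∀ k, mgf (X k) P (-1) ≤ 1 - d k * μ0 / 2 := by
    intro k
    have hpt : ∀ ω, Real.exp ((-1) * X k ω) ≤ 1 - X k ω / 2 := by
      intro ω
      have := exp_neg_le_one_sub_half (hX0 k ω) (hX1 k ω)
      simpa [neg_one_mul] using this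
    have hint2 : Integrable (fun ω => 1 - X k ω / 2) P :=
      (integrable_const (1:ℝ)).sub ((hXint k).div_const 2)
    calc mgf (X k) P (-1) = ∫ ω, Real.exp ((-1) * X k ω) ∂P := rfl
      _ ≤ ∫ ω, (1 - X k ω / 2) ∂P := integral_mono (hexpint k) hint2 hpt
      _ = 1 - d k * μ0 / 2 := by
          rw [integral_sub (integrable_const 1) ((hXint k).div_const 2)]
          rw [integral_div, hEX k]
          simp
  -- Chernoff bound for partial sums
  have hsum_tendsto : Tendsto
      (fun N => ∑ k ∈ Finset.range N, (1 / ((k:ℝ) + 1))) atTop atTop := by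
    have := Real.tendsto_sum_range_one_div_nat_succ_atTop
    simpa using this
  have hchern : ∀ (M : ℕ) (N : ℕ),
      (P {ω | (∑ k ∈ Finset.range N, X k) ω ≤ (M:ℝ)}).toReal
        ≤ Real.exp ((M:ℝ) - κ * μ0 / 2 * ∑ k ∈ Finset.range N, (1 / ((k:ℝ) + 1))) := by
    intro M N
    have hSNint : Integrable
        (fun ω => Real.exp ((-1) * (∑ k ∈ Finset.range N, X k) ω)) P :=
      hXindep.integrable_exp_mul_sum hXmeas (fun k _ => hexpint k)
    have h := measure_le_le_exp_mul_mgf (μ := P) (X := ∑ k ∈ Finset.range N, X k)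
      (M:ℝ) (by norm_num : (-1:ℝ) ≤ 0) hSNint
    have hmgfsum : mgf (∑ k ∈ Finset.range N, X k) P (-1)
        = ∏ k ∈ Finset.range N, mgf (X k) P (-1) :=
      hXindep.mgf_sum hXmeas (Finset.range N)
    have hprodbound : ∏ k ∈ Finset.range N, mgf (X k) P (-1)
        ≤ Real.exp (- (μ0 / 2) * κ * ∑ k ∈ Finset.range N, (1 / ((k:ℝ) + 1))) := by
      calc ∏ k ∈ Finset.range N, mgf (X k) P (-1)
          ≤ ∏ k ∈ Finset.range N, (1 - d k * μ0 / 2) := by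
            apply Finset.prod_le_prod (fun k _ => mgf_nonneg) (fun k _ => hmgf k)
        _ ≤ ∏ k ∈ Finset.range N, Real.exp (-(d k * μ0 / 2)) := by
            apply Finset.prod_le_prod
            · intro k _
              nlinarith [hdμ01 k, hd0 k, hμ0pos]
            · intro k _
              have := Real.add_one_le_exp (-(d k * μ0 / 2))
              linarith
        _ = Real.exp (∑ k ∈ Finset.range N, -(d k * μ0 / 2)) := (Real.exp_sum _ _).symm
        _ = Real.exp (- (μ0 / 2) * κ * ∑ k ∈ Finset.range N, (1 / ((k:ℝ) + 1))) := by
            congr 1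
            rw [Finset.mul_sum]
            apply Finset.sum_congr rfl
            intro k _
            rw [hddef]
            field_simp
    refine h.trans ?_
    rw [hmgfsum, show (-(-1:ℝ) * (M:ℝ)) = (M:ℝ) by ring]
    calc Real.exp ((M:ℝ)) * ∏ k ∈ Finset.range N, mgf (X k) P (-1)
        ≤ Real.exp ((M:ℝ))
            * Real.exp (- (μ0 / 2) * κ * ∑ k ∈ Finset.range N, (1 / ((k:ℝ) + 1))) :=
          mul_le_mul_of_nonneg_left hprodbound (Real.exp_pos _).le
      _ = Real.exp ((M:ℝ) - κ * μ0 / 2 * ∑ k ∈ Finset.range N, (1 / ((k:ℝ) + 1))) := by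
          rw [← Real.exp_add]
          congr 1
          ring
  -- each level set is null
  have hEMnull : ∀ M : ℕ,
      P {ω | (∑' k : ℕ, ENNReal.ofReal (X k ω)) ≤ (M : ENNReal)} = 0 := by
    intro M
    set EM := {ω | (∑' k : ℕ, ENNReal.ofReal (X k ω)) ≤ (M : ENNReal)} with hEMdef
    have hsub : ∀ N : ℕ, EM ⊆ {ω | (∑ k ∈ Finset.range N, X k) ω ≤ (M:ℝ)} := by
      intro N ω hω
      simp only [Set.mem_setOf_eq] at hω ⊢
      have h1 : ENNReal.ofReal ((∑ k ∈ Finset.range N, X k) ω)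
          = ∑ k ∈ Finset.range N, ENNReal.ofReal (X k ω) := by
        rw [Finset.sum_apply]
        exact ENNReal.ofReal_sum_of_nonneg (fun k _ => hX0 k ω)
      have h2 : (∑ k ∈ Finset.range N, ENNReal.ofReal (X k ω))
          ≤ ∑' k : ℕ, ENNReal.ofReal (X k ω) := ENNReal.sum_le_tsum _
      have h3 : ENNReal.ofReal ((∑ k ∈ Finset.range N, X k) ω)
          ≤ ENNReal.ofReal (M:ℝ) := by
        rw [h1]
        refine h2.trans (hω.trans_eq ?_)
        simp [ENNReal.ofReal_natCast]
      exact (ENNReal.ofReal_le_ofReal_iff (Nat.cast_nonneg M)).mp h3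
    have hbound : ∀ N : ℕ, (P EM).toReal
        ≤ Real.exp ((M:ℝ) - κ * μ0 / 2 * ∑ k ∈ Finset.range N, (1 / ((k:ℝ) + 1))) := by
      intro N
      refine le_trans ?_ (hchern M N)
      apply ENNReal.toReal_mono (measure_ne_top _ _)
      exact measure_mono (hsub N)
    have htend : Tendsto
        (fun N => Real.exp ((M:ℝ) - κ * μ0 / 2 * ∑ k ∈ Finset.range N, (1 / ((k:ℝ) + 1))))
        atTop (nhds 0) := by
      apply Real.tendsto_exp_atBot.comp
      have hcpos : 0 < κ * μ0 / 2 := by positivity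
      have h1 : Tendsto (fun N => (κ * μ0 / 2) * ∑ k ∈ Finset.range N, (1 / ((k:ℝ) + 1)))
          atTop atTop := hsum_tendsto.const_mul_atTop hcpos
      have h2 : Tendsto
          (fun N => -((κ * μ0 / 2) * ∑ k ∈ Finset.range N, (1 / ((k:ℝ) + 1))))
          atTop atBot := tendsto_neg_atTop_atBot.comp h1
      have h3 := tendsto_atBot_add_const_left atTop ((M:ℕ):ℝ) h2
      refine h3.congr fun N => ?_
      ring
    have : (P EM).toReal ≤ 0 := ge_of_tendsto' htend hbound
    have h0 : (P EM).toReal = 0 := le_antisymm this ENNReal.toReal_nonneg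
    rcases (ENNReal.toReal_eq_zero_iff _).mp h0 with h | h
    · exact h
    · exact absurd h (measure_ne_top _ _)
  -- a.s. divergence of the X-series
  have hdiv : ∀ᵐ ω ∂P, (∑' k : ℕ, ENNReal.ofReal (X k ω)) = ⊤ := by
    rw [ae_iff]
    have hsub : {ω | ¬ (∑' k : ℕ, ENNReal.ofReal (X k ω)) = ⊤}
        ⊆ ⋃ M : ℕ, {ω | (∑' k : ℕ, ENNReal.ofReal (X k ω)) ≤ (M : ENNReal)} := by
      intro ω hω
      simp only [Set.mem_setOf_eq] at hω
      obtain ⟨M, hM⟩ := ENNReal.exists_nat_gt (lt_top_iff_ne_top.mpr hω).ne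
      exact Set.mem_iUnion.mpr ⟨M, hM.le⟩
    refine le_antisymm ?_ zero_le
    calc P _ ≤ P (⋃ M : ℕ, {ω | (∑' k : ℕ, ENNReal.ofReal (X k ω)) ≤ (M : ENNReal)}) :=
          measure_mono hsub
      _ ≤ ∑' M : ℕ, P {ω | (∑' k : ℕ, ENNReal.ofReal (X k ω)) ≤ (M : ENNReal)} :=
          measure_iUnion_le _
      _ = 0 := by simp [hEMnull]
  -- conclusion
  have haeall : ∀ᵐ ω ∂P, ∀ k : ℕ, a k ω = a' k ω := ae_all_iff.mpr ha'ae
  filter_upwards [hdiv, haeall] with ω hω hωa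
  rw [eq_top_iff]
  have hj : Function.Injective (fun k : ℕ => (⟨(k : ℤ) + 1, hne k⟩ : {n : ℤ // n ≠ 0})) := by
    intro x y h
    have : ((x : ℤ)) + 1 = (y : ℤ) + 1 := by
      simpa [Subtype.ext_iff] using h
    have : (x : ℤ) = y := by omega
    exact_mod_cast this
  calc (⊤ : ENNReal) = ∑' k : ℕ, ENNReal.ofReal (X k ω) := hω.symm
    _ ≤ ∑' k : ℕ, ENNReal.ofReal
        ((1 + (((((⟨(k : ℤ) + 1, hne k⟩ : {n : ℤ // n ≠ 0}) : ℤ)) : ℝ)) ^ 2) ^ (s * q / 2)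
          * |((((⟨(k : ℤ) + 1, hne k⟩ : {n : ℤ // n ≠ 0}) : ℤ)) : ℝ)| ^ (-q)
          * ‖g ((⟨(k : ℤ) + 1, hne k⟩ : {n : ℤ // n ≠ 0}) : ℤ) ω‖ ^ q) := by
        apply ENNReal.tsum_le_tsum
        intro k
        apply ENNReal.ofReal_le_ofReal
        have hXval : X k ω = d k * min (|(g ((k : ℤ) + 1) ω).re| ^ q) 1 := by
          simp only [hXdef, hφdef, Function.comp_apply]
          rw [← hωa k]
        rw [hXval, hddef, hκdef]
        have hcast : ((((k : ℤ) + 1 : ℤ)) : ℝ) = (k : ℝ) + 1 := by push_cast; ring_nf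
        rw [hcast]
        exact coeff_key hq hsq k (g ((k : ℤ) + 1) ω)
    _ ≤ ∑' n : {n : ℤ // n ≠ 0},
        ENNReal.ofReal
          ((1 + ((n : ℤ) : ℝ) ^ 2) ^ (s * q / 2) * |((n : ℤ) : ℝ)| ^ (-q)
            * ‖g (n : ℤ) ω‖ ^ q) :=
        ENNReal.tsum_comp_le_tsum_of_injective hj _
end
end

section
/- Let s ≥ 1. Then almost surely sup_{n∈ℤ∖{0}} ⟨n⟩^{s} |n|^{−1} |g_n| = ∞; that is, the Fourier–Wiener series u almost surely does not belong to 𝓕L^{s,∞}(𝕋) (equivalently, to M^{p,∞}_s(𝕋) for any 1 ≤ p ≤ ∞). -/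
open MeasureTheory ProbabilityTheory Filter

noncomputable section

lemma gauss_Ioi_pos (M : ℝ) : 0 < gaussianReal 0 1 (Set.Ioi M) := by
  rw [gaussianReal_apply _ one_ne_zero]
  rw [lintegral_pos_iff_support (measurable_gaussianPDF 0 1)]
  have : Function.support (gaussianPDF 0 1) = Set.univ := by
    ext x; simp [(gaussianPDF_pos 0 one_ne_zero x).ne']
  rw [this]
  simp [Real.volume_Ioi]

lemma gauss_Iic_lt_one (M : ℝ) : gaussianReal 0 1 (Set.Iic M) < 1 := by
  have h := gauss_Ioi_pos M
  have hc : Set.Iic M = (Set.Ioi M)ᶜ := by simp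
  rw [hc, prob_compl_eq_one_sub measurableSet_Ioi]
  exact ENNReal.sub_lt_self ENNReal.one_ne_top one_ne_zero h.ne'

lemma coeff_ge_one {n : ℤ} (hn : n ≠ 0) {s : ℝ} (hs : 1 ≤ s) :
    1 ≤ (1 + ((n : ℤ) : ℝ) ^ 2) ^ (s / 2) * |((n : ℤ) : ℝ)|⁻¹ := by
  set a : ℝ := |(n : ℝ)| with ha
  have ha1 : 1 ≤ a := by
    rw [ha, ← Int.cast_abs]
    exact_mod_cast Int.one_le_abs hn
  have ha0 : 0 < a := lt_of_lt_of_le one_pos ha1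
  have h1 : a ≤ (1 + (n : ℝ) ^ 2) ^ (s / 2) := by
    have h2 : (n : ℝ) ^ 2 = a ^ (2 : ℕ) := by rw [ha, sq_abs]
    have h3 : (a ^ (2 : ℕ) : ℝ) ^ (s / 2) = a ^ s := by
      rw [← Real.rpow_natCast a 2, ← Real.rpow_mul ha0.le]
      ring_nf
    calc a = a ^ (1 : ℝ) := (Real.rpow_one a).symm
      _ ≤ a ^ s := Real.rpow_le_rpow_of_exponent_le ha1 hs
      _ = (a ^ (2 : ℕ) : ℝ) ^ (s / 2) := h3.symm
      _ ≤ (1 + (n : ℝ) ^ 2) ^ (s / 2) := by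
          apply Real.rpow_le_rpow (by positivity) _ (by linarith)
          rw [← h2]; linarith
  calc (1 : ℝ) = a * a⁻¹ := (mul_inv_cancel₀ ha0.ne').symm
    _ ≤ (1 + (n : ℝ) ^ 2) ^ (s / 2) * a⁻¹ := by
        exact mul_le_mul_of_nonneg_right h1 (by positivity)

/-- If `s ≥ 1`, then almost surely `sup_{n ≠ 0} ⟨n⟩^s |n|⁻¹ |gₙ| = ∞`, i.e. the
Fourier–Wiener series a.s. does not belong to `𝓕L^{s,∞}(𝕋) = M^{p,∞}_s(𝕋)`. -/
theorem brownian_not_in_FourierLebesgue_qInfty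
    {Ω : Type*} [MeasurableSpace Ω] (P : Measure Ω) [IsProbabilityMeasure P]
    (g : ℤ → Ω → ℂ) (hg : IsStdComplexGaussianFamily P g)
    (s : ℝ) (hs : 1 ≤ s) :
    ∀ᵐ ω ∂P,
      (⨆ n : {n : ℤ // n ≠ 0},
        ENNReal.ofReal
          ((1 + ((n : ℤ) : ℝ) ^ 2) ^ (s / 2) * |((n : ℤ) : ℝ)|⁻¹
            * ‖g (n : ℤ) ω‖)) = ⊤ := by
  set f : {n : ℤ // n ≠ 0} × Bool → Ω → ℝ := fun i ω =>
    if i.2 then (g (i.1 : ℤ) ω).re else (g (i.1 : ℤ) ω).im with hf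
  -- a.e. measurability of the real parts
  have haem : ∀ i, AEMeasurable (f i) P := by
    intro i
    by_contra h
    have h0 := Measure.map_of_not_aemeasurable (μ := P) h
    rw [hg.2 i] at h0
    have : (gaussianReal 0 1) Set.univ = 1 := measure_univ
    rw [h0] at this
    simp at this
  -- the key zero-probability estimate
  have key : ∀ M : ℕ,
      P {ω | ∀ n : {n : ℤ // n ≠ 0}, (g (n : ℤ) ω).re ≤ (M : ℝ)} = 0 := by
    intro M
    set p : ENNReal := gaussianReal 0 1 (Set.Iic (M : ℝ)) with hpdef
    have hp : p < 1 := gauss_Iic_lt_one _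
    set A := {ω | ∀ n : {n : ℤ // n ≠ 0}, (g (n : ℤ) ω).re ≤ (M : ℝ)} with hA
    have hbound : ∀ k : ℕ, P A ≤ p ^ k := by
      intro k
      have hinj : Function.Injective (fun j : ℕ => (⟨(j : ℤ) + 1, by omega⟩ : {n : ℤ // n ≠ 0})) := by
        intro a b hab
        simpa [Subtype.ext_iff] using hab
      set F : Finset {n : ℤ // n ≠ 0} :=
        (Finset.range k).image (fun j : ℕ => (⟨(j : ℤ) + 1, by omega⟩ : {n : ℤ // n ≠ 0})) with hF
      have hFcard : F.card = k := by
        rw [hF, Finset.card_image_of_injective _ hinj, Finset.card_range]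
      have hinj2 : Function.Injective
          (fun n : {n : ℤ // n ≠ 0} => (n, true)) := fun a b hab => by
        simpa using congrArg Prod.fst hab
      set S : Finset ({n : ℤ // n ≠ 0} × Bool) := F.image (fun n => (n, true)) with hS
      have hScard : S.card = k := by
        rw [hS, Finset.card_image_of_injective _ hinj2, hFcard]
      have hprod := hg.1.measure_inter_preimage_eq_mul S
        (sets := fun _ => Set.Iic (M : ℝ)) (fun i _ => measurableSet_Iic)
      have hfac : ∀ i, P (f i ⁻¹' Set.Iic (M : ℝ)) = p := by
        intro i
        rw [← Measure.map_apply_of_aemeasurable (haem i) measurableSet_Iic, hg.2 i]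
      have hprod2 : P (⋂ i ∈ S, f i ⁻¹' Set.Iic (M : ℝ)) = p ^ k := by
        rw [hprod]
        rw [Finset.prod_congr rfl (fun i _ => hfac i), Finset.prod_const, hScard]
      have hsub : A ⊆ ⋂ i ∈ S, f i ⁻¹' Set.Iic (M : ℝ) := by
        intro ω hω
        rw [Set.mem_iInter₂]
        intro i hi
        rw [hS, Finset.mem_image] at hi
        obtain ⟨n, _, rfl⟩ := hi
        simpa [hf] using hω n
      calc P A ≤ P (⋂ i ∈ S, f i ⁻¹' Set.Iic (M : ℝ)) := measure_mono hsub
        _ = p ^ k := hprod2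
    have htend := ENNReal.tendsto_pow_atTop_nhds_zero_of_lt_one hp
    exact le_antisymm (ge_of_tendsto' htend hbound) zero_le
  have hae : ∀ᵐ ω ∂P, ∀ M : ℕ, ∃ n : {n : ℤ // n ≠ 0}, (M : ℝ) < (g (n : ℤ) ω).re := by
    rw [ae_all_iff]
    intro M
    rw [ae_iff]
    have : {ω | ¬ ∃ n : {n : ℤ // n ≠ 0}, (M : ℝ) < (g (n : ℤ) ω).re}
        = {ω | ∀ n : {n : ℤ // n ≠ 0}, (g (n : ℤ) ω).re ≤ (M : ℝ)} := by
      ext ω; simp [not_lt]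
    rw [this]
    exact key M
  filter_upwards [hae] with ω hω
  by_contra hne
  obtain ⟨M, hM⟩ := ENNReal.exists_nat_gt hne
  obtain ⟨n, hn⟩ := hω M
  have habs : (M : ℝ) ≤ (1 + ((n : ℤ) : ℝ) ^ 2) ^ (s / 2) * |((n : ℤ) : ℝ)|⁻¹
      * ‖g (n : ℤ) ω‖ := by
    have h1 : (M : ℝ) ≤ ‖g (n : ℤ) ω‖ :=
      hn.le.trans ((le_abs_self _).trans (Complex.abs_re_le_norm _))
    have h2 := coeff_ge_one n.prop hs
    nlinarith [norm_nonneg (g (n : ℤ) ω), Nat.cast_nonneg (α := ℝ) M]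
  have h3 : (M : ENNReal) ≤ ENNReal.ofReal
      ((1 + ((n : ℤ) : ℝ) ^ 2) ^ (s / 2) * |((n : ℤ) : ℝ)|⁻¹ * ‖g (n : ℤ) ω‖) := by
    rw [← ENNReal.ofReal_natCast M]
    exact ENNReal.ofReal_le_ofReal habs
  exact absurd (h3.trans (le_iSup (fun m : {n : ℤ // n ≠ 0} =>
    ENNReal.ofReal ((1 + ((m : ℤ) : ℝ) ^ 2) ^ (s / 2) * |((m : ℤ) : ℝ)|⁻¹
      * ‖g (m : ℤ) ω‖)) n)) (not_le.mpr hM)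
end
end
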